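/- The following hold: (i) max(√(ξ·s_n²/n) − M·ξ/n, 0) ≤ z̄ − min_{w ∈ K} Σᵢ wᵢ·zᵢ ≤ √(ξ·s_n²/n); and (ii) if in addition s_n² ≥ ξ·M²/n, then min_{w ∈ K} Σᵢ wᵢ·zᵢ = z̄ − √(ξ·s_n²/n). -/

import Mathlib

open Finset

noncomputable section

/-- variance representation of the lower confidence bound over the
χ²-divergence ball `K` around the uniform distribution. -/
theorem stmt_13 (n : ℕ) (hn : 1 ≤ n) (M ξ : ℝ) (hM : 0 < M) (hξ : 0 ≤ ξ)
    (z : Fin n → ℝ) (hz : ∀ i, z i ∈ Set.Icc (0 : ℝ) M) :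
    let zbar : ℝ := (1 / (n : ℝ)) * ∑ i, z i
    let s2 : ℝ := (1 / (n : ℝ)) * ∑ i, (z i) ^ 2 - zbar ^ 2
    let K : Set (Fin n → ℝ) := {w | (∀ i, 0 ≤ w i) ∧ ∑ i, w i = 1 ∧
      (1 / (n : ℝ)) * ∑ i, ((n : ℝ) * w i - 1) ^ 2 ≤ ξ / n}
    let m : ℝ := sInf {x : ℝ | ∃ w ∈ K, x = ∑ i, w i * z i}
    (max (Real.sqrt (ξ * s2 / n) - M * ξ / n) 0 ≤ zbar - m ∧
      zbar - m ≤ Real.sqrt (ξ * s2 / n)) ∧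
    (ξ * M ^ 2 / n ≤ s2 → m = zbar - Real.sqrt (ξ * s2 / n)) := by
  intro zbar s2 K m
  have hn0 : (0:ℝ) < n := by exact_mod_cast hn
  have hsum : ∑ i, z i = n * zbar := by
    simp only [zbar]; field_simp
  set V : ℝ := ∑ i, (z i - zbar)^2 with hVdef
  have hV0 : 0 ≤ V := Finset.sum_nonneg fun i _ => sq_nonneg _
  have hsz : ∑ i, (z i - zbar) = 0 := by
    rw [Finset.sum_sub_distrib, hsum, Finset.sum_const, Finset.card_univ,
      Fintype.card_fin, nsmul_eq_mul]
    ring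
  have hVs2 : V = n * s2 := by
    have h1 : ∀ i ∈ Finset.univ, (z i - zbar)^2 = z i ^ 2 - 2*zbar*(z i) + zbar^2 := by
      intro i _; ring
    rw [hVdef, Finset.sum_congr rfl h1]
    rw [Finset.sum_add_distrib, Finset.sum_sub_distrib, ← Finset.mul_sum, hsum,
      Finset.sum_const, Finset.card_univ, Fintype.card_fin, nsmul_eq_mul]
    simp only [s2]
    field_simp
    ring
  have hzbar0 : 0 ≤ zbar := by
    have h1 : 0 ≤ ∑ i, z i := Finset.sum_nonneg fun i _ => (hz i).1
    have h2 : (0:ℝ) ≤ 1/n := by positivity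
    exact mul_nonneg h2 h1
  have hsqrt : Real.sqrt (ξ * s2 / n) = Real.sqrt (ξ * V) / n := by
    have h1 : ξ * s2 / n = (Real.sqrt (ξ * V) / n)^2 := by
      rw [div_pow, Real.sq_sqrt (mul_nonneg hξ hV0), hVs2]
      field_simp
    rw [h1, Real.sqrt_sq (by positivity)]
  -- lower bound for every element of the feasible value set (Cauchy–Schwarz)
  have hlb_mem : ∀ x ∈ {x : ℝ | ∃ w ∈ K, x = ∑ i, w i * z i},
      zbar - Real.sqrt (ξ * V) / n ≤ x := by
    rintro x ⟨w, ⟨hw0, hw1, hw2⟩, rfl⟩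
    have hdiff : ∑ i, (w i - 1/n) * (z i - zbar) = (∑ i, w i * z i) - zbar := by
      have h1 : ∀ i ∈ Finset.univ,
          (w i - 1/n) * (z i - zbar) = w i * z i - zbar * w i - (1/n) * z i + zbar/n := by
        intro i _; field_simp; ring
      rw [Finset.sum_congr rfl h1]
      rw [Finset.sum_add_distrib, Finset.sum_sub_distrib, Finset.sum_sub_distrib,
        ← Finset.mul_sum, ← Finset.mul_sum, hw1, hsum, Finset.sum_const,
        Finset.card_univ, Fintype.card_fin, nsmul_eq_mul]
      field_simp
      ring
    have hA : ∑ i, (w i - 1/n)^2 ≤ ξ / n^2 := by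
      have h1 : ∀ i ∈ Finset.univ, ((n:ℝ) * w i - 1)^2 = n^2 * (w i - 1/n)^2 := by
        intro i _; field_simp
      rw [Finset.sum_congr rfl h1, ← Finset.mul_sum] at hw2
      have h2 : (n:ℝ)^2 * ∑ i, (w i - 1/n)^2 ≤ ξ := by
        have h3 := mul_le_mul_of_nonneg_left hw2 hn0.le
        have e1 : (n:ℝ) * (1/n * (n^2 * ∑ i, (w i - 1/n)^2))
            = n^2 * ∑ i, (w i - 1/n)^2 := by field_simp
        have e2 : (n:ℝ) * (ξ/n) = ξ := by field_simp
        rw [e1, e2] at h3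
        exact h3
      calc ∑ i, (w i - 1/n)^2
          = ((n:ℝ)^2 * ∑ i, (w i - 1/n)^2)/(n:ℝ)^2 :=
            (mul_div_cancel_left₀ _ (by positivity : ((n:ℝ)^2) ≠ 0)).symm
        _ ≤ ξ / n^2 := by gcongr
    have hcs := Finset.sum_mul_sq_le_sq_mul_sq Finset.univ
      (fun i => w i - 1/n) (fun i => z i - zbar)
    have h1 : (∑ i, (w i - 1/n) * (z i - zbar))^2 ≤ ξ / n^2 * V := by
      calc (∑ i, (w i - 1/n) * (z i - zbar))^2
          ≤ (∑ i, (w i - 1/n)^2) * ∑ i, (z i - zbar)^2 := hcs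
        _ ≤ ξ / n^2 * V := mul_le_mul_of_nonneg_right hA hV0
    have habs : |∑ i, (w i - 1/n) * (z i - zbar)| ≤ Real.sqrt (ξ / n^2 * V) :=
      Real.abs_le_sqrt h1
    have h2 : Real.sqrt (ξ / n^2 * V) = Real.sqrt (ξ * V) / n := by
      have h3 : ξ / n^2 * V = (Real.sqrt (ξ * V) / n)^2 := by
        rw [div_pow, Real.sq_sqrt (mul_nonneg hξ hV0)]; ring
      rw [h3, Real.sqrt_sq (by positivity)]
    rw [h2] at habs
    have h4 := neg_abs_le (∑ i, (w i - 1/n) * (z i - zbar))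
    have h5 : -(Real.sqrt (ξ * V) / n) ≤ (∑ i, w i * z i) - zbar := by
      rw [← hdiff]; linarith
    linarith
  have hbdd : BddBelow {x : ℝ | ∃ w ∈ K, x = ∑ i, w i * z i} :=
    ⟨zbar - Real.sqrt (ξ * V) / n, fun x hx => hlb_mem x hx⟩
  -- construction of feasible points
  have hconstruct : ∀ β : ℝ, 0 ≤ β → β^2 * V ≤ ξ → β ≤ 1/M →
      (zbar - β * V / n) ∈ {x : ℝ | ∃ w ∈ K, x = ∑ i, w i * z i} := by
    intro β hβ0 hβV hβM
    refine ⟨fun i => (1 - β * (z i - zbar))/n, ⟨?_, ?_, ?_⟩, ?_⟩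
    · intro i
      have h1 : β * (z i - zbar) ≤ 1 := by
        rcases le_or_gt (z i - zbar) 0 with h | h
        · exact le_trans (mul_nonpos_of_nonneg_of_nonpos hβ0 h) zero_le_one
        · have hz1 := (hz i).2
          calc β * (z i - zbar) ≤ (1/M) * M :=
                mul_le_mul hβM (by linarith) h.le (by positivity)
            _ = 1 := by field_simp
      exact div_nonneg (by linarith) hn0.le
    · rw [← Finset.sum_div, Finset.sum_sub_distrib, ← Finset.mul_sum, hsz,
        Finset.sum_const, Finset.card_univ, Fintype.card_fin, nsmul_eq_mul,
        mul_one, mul_zero, sub_zero, div_self hn0.ne']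
    · have h1 : ∀ i ∈ Finset.univ,
          ((n:ℝ) * ((1 - β * (z i - zbar))/n) - 1)^2 = β^2 * (z i - zbar)^2 := by
        intro i _; field_simp; ring
      rw [Finset.sum_congr rfl h1, ← Finset.mul_sum, ← hVdef]
      calc 1/(n:ℝ) * (β^2 * V) = (β^2 * V)/n := by ring
        _ ≤ ξ / n := by gcongr
    · have h1 : ∀ i ∈ Finset.univ,
          ((1 - β * (z i - zbar))/n) * z i
            = z i / n - (β/n) * ((z i - zbar) * (z i - zbar))
              - (β/n) * (zbar * (z i - zbar)) := by
        intro i _; field_simp; ring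
      have h2 : ∑ i, (z i - zbar) * (z i - zbar) = V := by
        rw [hVdef]; exact Finset.sum_congr rfl fun i _ => (sq (z i - zbar)).symm
      have h3 : ∑ i, zbar * (z i - zbar) = 0 := by
        rw [← Finset.mul_sum, hsz, mul_zero]
      rw [Finset.sum_congr rfl h1, Finset.sum_sub_distrib, Finset.sum_sub_distrib,
        ← Finset.sum_div, hsum]
      rw [← Finset.mul_sum, ← Finset.mul_sum, h2, h3, mul_zero, sub_zero]
      field_simp
  have hSne : {x : ℝ | ∃ w ∈ K, x = ∑ i, w i * z i}.Nonempty :=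
    ⟨_, hconstruct 0 le_rfl (by simpa using hξ) (by positivity)⟩
  have hub : zbar - Real.sqrt (ξ * V) / n ≤ m := le_csInf hSne hlb_mem
  have hm_le : ∀ β : ℝ, 0 ≤ β → β^2 * V ≤ ξ → β ≤ 1/M → m ≤ zbar - β * V / n :=
    fun β h1 h2 h3 => csInf_le hbdd (hconstruct β h1 h2 h3)
  have hm_zbar : m ≤ zbar := by
    have := hm_le 0 le_rfl (by simpa using hξ) (by positivity)
    simpa using this
  have hMξ : 0 ≤ M * ξ / n := by positivity
  rcases eq_or_lt_of_le hV0 with hVeq | hVpos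
  · -- V = 0
    have h0 : Real.sqrt (ξ * V) / n = 0 := by rw [← hVeq]; simp
    refine ⟨⟨?_, ?_⟩, ?_⟩
    · rw [hsqrt, h0]
      exact max_le (by linarith) (by linarith)
    · rw [hsqrt, h0]; linarith
    · intro _
      rw [hsqrt, h0]
      have h1 := hub
      rw [h0] at h1
      linarith
  · -- V > 0
    have hsV : 0 < Real.sqrt V := Real.sqrt_pos.2 hVpos
    have hdivsq : Real.sqrt ξ / Real.sqrt V * V = Real.sqrt (ξ * V) := by
      rw [div_mul_eq_mul_div, mul_div_assoc, Real.div_sqrt, Real.sqrt_mul hξ]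
    set β : ℝ := min (Real.sqrt ξ / Real.sqrt V) (1/M) with hβdef
    have hβ0 : 0 ≤ β := le_min (by positivity) (by positivity)
    have hβ2 : β^2 * V ≤ ξ := by
      have h1 : β ≤ Real.sqrt ξ / Real.sqrt V := min_le_left _ _
      have h2 : β^2 ≤ ξ / V := by
        have h3 : β^2 ≤ (Real.sqrt ξ / Real.sqrt V)^2 := pow_le_pow_left₀ hβ0 h1 2
        rwa [div_pow, Real.sq_sqrt hξ, Real.sq_sqrt hV0] at h3
      calc β^2 * V ≤ (ξ/V) * V := mul_le_mul_of_nonneg_right h2 hV0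
        _ = ξ := div_mul_cancel₀ _ (ne_of_gt hVpos)
    have hβM : β ≤ 1/M := min_le_right _ _
    have hmβ : m ≤ zbar - β * V / n := hm_le β hβ0 hβ2 hβM
    have hmain : Real.sqrt (ξ * V) ≤ β * V + M * ξ := by
      rcases le_total (Real.sqrt ξ / Real.sqrt V) (1/M) with h | h
      · have hβeq : β = Real.sqrt ξ / Real.sqrt V := min_eq_left h
        rw [hβeq, hdivsq]
        nlinarith [mul_nonneg hM.le hξ]
      · have hβeq : β = 1/M := min_eq_right h
        have h1 : Real.sqrt V ≤ M * Real.sqrt ξ := by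
          rw [div_le_div_iff₀ hM hsV] at h
          linarith
        have h2 : Real.sqrt (ξ * V) ≤ M * ξ := by
          rw [Real.sqrt_mul hξ]
          calc Real.sqrt ξ * Real.sqrt V ≤ Real.sqrt ξ * (M * Real.sqrt ξ) :=
                mul_le_mul_of_nonneg_left h1 (Real.sqrt_nonneg _)
            _ = M * (Real.sqrt ξ * Real.sqrt ξ) := by ring
            _ = M * ξ := by rw [Real.mul_self_sqrt hξ]
        have h3 : 0 ≤ β * V := mul_nonneg hβ0 hV0
        linarith
    refine ⟨⟨?_, ?_⟩, ?_⟩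
    · rw [hsqrt]
      refine max_le ?_ (by linarith)
      have h4 : (Real.sqrt (ξ * V) - M * ξ) / n ≤ β * V / n := by gcongr; linarith
      have h5 : Real.sqrt (ξ * V) / n - M * ξ / n = (Real.sqrt (ξ * V) - M * ξ) / n := by
        ring
      linarith
    · rw [hsqrt]; linarith
    · intro hii
      have hξM2 : ξ * M^2 ≤ V := by
        rw [div_le_iff₀ hn0] at hii
        rw [hVs2]
        linarith
      have h1 : Real.sqrt ξ * M ≤ Real.sqrt V := by
        have h2 : Real.sqrt (ξ * M^2) ≤ Real.sqrt V := Real.sqrt_le_sqrt hξM2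
        rwa [Real.sqrt_mul hξ, Real.sqrt_sq hM.le] at h2
      have h2 : Real.sqrt ξ / Real.sqrt V ≤ 1/M := by
        rw [div_le_div_iff₀ hsV hM]
        linarith
      have hβeq : β = Real.sqrt ξ / Real.sqrt V := min_eq_left h2
      have hβV : β * V = Real.sqrt (ξ * V) := by rw [hβeq, hdivsq]
      rw [hβV] at hmβ
      rw [hsqrt]
      linarith
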